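/- Assume f is twice differentiable and satisfies the cubic upper bound with constant L_H > 0. Let ε_g, ε_h ∈ (0,1), η ∈ (0, 1/2), θ ∈ (0,1), and x ∈ ℝⁿ. Let u ∈ ℝⁿ with ‖u‖ = 1 and u_i = 0 whenever x_i = 0, and suppose ρ := ⟨S_{x,ε_g}u, ∇²f(x)·S_{x,ε_g}u⟩ ≤ −ε_h/2. Set σ = 1 if ⟨g(x), S_{x,ε_g}u⟩ ≥ 0 and σ = −1 otherwise, and d = −σ·|ρ|·u. Then there exists a smallest nonnegative integer j* such that φ(x + θ^{j*}·S_{x,ε_g}d) < φ(x) − η·θ^{2j*}·‖d‖³, and φ(x) − φ(x + θ^{j*}·S_{x,ε_g}d) > (η·θ²/8)·min{1, 9(1 − 2η)²/L_H²}·min{ε_g·ε_h, ε_h³}. -/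

import Mathlib

open scoped RealInnerProductSpace

noncomputable section

/-- `ℝⁿ` with the Euclidean norm. -/
abbrev E (n : ℕ) := EuclideanSpace ℝ (Fin n)

/-- The vector `g(x)` measuring first-order stationarity of `f + lam‖·‖₁`. -/
def gvec (n : ℕ) (f : E n → ℝ) (lam : ℝ) (x : E n) : E n := WithLp.toLp 2 fun i =>
  if 0 < x i then gradient f x i + lam
  else if x i < 0 then gradient f x i - lam
  else gradient f x i - min (max (-lam) (gradient f x i)) lam

/-- The proximal-gradient residual `G_t(x) = t (x - prox_{(lam/t)‖·‖₁}(x - ∇f(x)/t))`. -/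
def Gres (n : ℕ) (f : E n → ℝ) (lam t : ℝ) (x : E n) : E n := WithLp.toLp 2 fun i =>
  if (gradient f x i + lam) / t < x i then gradient f x i + lam
  else if x i < (gradient f x i - lam) / t then gradient f x i - lam
  else t * x i

/-- The proximal-gradient update `P_t(x) = prox_{(lam/t)‖·‖₁}(x - ∇f(x)/t)` (soft-thresholding). -/
def Pt (n : ℕ) (f : E n → ℝ) (lam t : ℝ) (x : E n) : E n := WithLp.toLp 2 fun i =>
  if lam / t < x i - gradient f x i / t then x i - gradient f x i / t - lam / t
  else if x i - gradient f x i / t < -(lam / t) then x i - gradient f x i / t + lam / t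
  else 0

/-- The objective `φ(x) = f(x) + lam ‖x‖₁`. -/
def phi (n : ℕ) (f : E n → ℝ) (lam : ℝ) (x : E n) : ℝ := f x + lam * ∑ i, |x i|

/-- The Hessian of `f` at `x`, as a continuous linear map. -/
def hess (n : ℕ) (f : E n → ℝ) (x : E n) : E n →L[ℝ] E n := fderiv ℝ (gradient f) x

/-- The scaling map `S_{x,ε}`: identity on coordinates with `|x_i| > √ε`, multiplication by
`x_i` on the others. -/
def Smap (n : ℕ) (x : E n) (eps : ℝ) (u : E n) : E n := WithLp.toLp 2 fun i =>
  if Real.sqrt eps < |x i| then u i else x i * u i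

/-- The relaxed first-order residual vector `g^ε(x)`. -/
def gveps (n : ℕ) (f : E n → ℝ) (lam eps : ℝ) (x : E n) : E n := WithLp.toLp 2 fun i =>
  if Real.sqrt eps < x i then gradient f x i + lam
  else if x i < -Real.sqrt eps then gradient f x i - lam
  else gradient f x i -
    min (max (-(lam + eps ^ ((3:ℝ)/4))) (gradient f x i)) (lam + eps ^ ((3:ℝ)/4))

lemma coord_abs_le_norm {n : ℕ} (a : E n) (i : Fin n) : |a i| ≤ ‖a‖ := by
  rw [EuclideanSpace.norm_eq, ← Real.sqrt_sq_eq_abs]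
  apply Real.sqrt_le_sqrt
  have := Finset.single_le_sum (f := fun j => ‖a j‖ ^ 2)
    (fun j _ => by positivity) (Finset.mem_univ i)
  simpa [Real.norm_eq_abs, sq_abs] using this

lemma norm_le_norm_of_coord {n : ℕ} (a b : E n) (h : ∀ i, |a i| ≤ |b i|) : ‖a‖ ≤ ‖b‖ := by
  rw [EuclideanSpace.norm_eq, EuclideanSpace.norm_eq]
  apply Real.sqrt_le_sqrt
  apply Finset.sum_le_sum
  intro i _
  simp only [Real.norm_eq_abs]
  exact pow_le_pow_left₀ (abs_nonneg _) (h i) 2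

set_option maxHeartbeats 2000000 in
/-- A negative-curvature step of the hybrid proximal gradient / negative
curvature method: the line search terminates at a smallest `j*` and yields a decrease of more
than `(ηθ²/8) min{1, 9(1-2η)²/L_H²} min{ε_g ε_h, ε_h³}`. -/
theorem stmt8 {n : ℕ} (f : E n → ℝ) (hf1 : Differentiable ℝ f)
    (hf2 : Differentiable ℝ (gradient f)) (lam : ℝ) (hlam : 0 < lam)
    (LH : ℝ) (hLH : 0 < LH)
    (hcubic : ∀ x y : E n, f y ≤ f x + ⟪gradient f x, y - x⟫ +
      1 / 2 * ⟪y - x, hess n f x (y - x)⟫ + LH / 6 * ‖y - x‖ ^ 3)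
    (εg εh η θ : ℝ) (hεg : εg ∈ Set.Ioo (0:ℝ) 1) (hεh : εh ∈ Set.Ioo (0:ℝ) 1)
    (hη : η ∈ Set.Ioo (0:ℝ) (1/2)) (hθ : θ ∈ Set.Ioo (0:ℝ) 1)
    (x u : E n) (hu : ‖u‖ = 1) (hu0 : ∀ i, x i = 0 → u i = 0)
    (ρ : ℝ) (hρ : ρ = ⟪Smap n x εg u, hess n f x (Smap n x εg u)⟫)
    (hρneg : ρ ≤ -εh / 2)
    (σ : ℝ) (hσ : σ = if 0 ≤ ⟪gvec n f lam x, Smap n x εg u⟫ then 1 else -1)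
    (d : E n) (hd : d = -(σ * |ρ|) • u) :
    ∃ j : ℕ,
      (phi n f lam (x + θ ^ j • Smap n x εg d) <
          phi n f lam x - η * θ ^ (2 * j) * ‖d‖ ^ 3) ∧
      (∀ j' < j, ¬(phi n f lam (x + θ ^ j' • Smap n x εg d) <
          phi n f lam x - η * θ ^ (2 * j') * ‖d‖ ^ 3)) ∧
      η * θ ^ 2 / 8 * min 1 (9 * (1 - 2 * η) ^ 2 / LH ^ 2) * min (εg * εh) (εh ^ 3) <
        phi n f lam x - phi n f lam (x + θ ^ j • Smap n x εg d) := by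
  
  classical
  obtain ⟨hεg0, hεg1⟩ := hεg
  obtain ⟨hεh0, hεh1⟩ := hεh
  obtain ⟨hη0, hη1⟩ := hη
  obtain ⟨hθ0, hθ1⟩ := hθ
  set g := gvec n f lam x with hg
  set v := Smap n x εg u with hv
  set s := Smap n x εg d with hsdef
  have hrεg0 : 0 < Real.sqrt εg := Real.sqrt_pos.mpr hεg0
  have hrεg1 : Real.sqrt εg ≤ 1 := by
    have := Real.sqrt_le_sqrt hεg1.le
    simpa using this
  have hρ0 : ρ < 0 := lt_of_le_of_lt hρneg (by linarith)
  have habsρ : |ρ| = -ρ := abs_of_neg hρ0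
  have hσ2 : σ * σ = 1 := by rw [hσ]; split <;> norm_num
  have habsσ : |σ| = 1 := by rw [hσ]; split <;> norm_num
  have hd_i : ∀ i, d i = -(σ * |ρ|) * u i := fun i => by rw [hd]; rfl
  have hnd : ‖d‖ = |ρ| := by
    rw [hd, norm_smul, hu, mul_one, Real.norm_eq_abs, abs_neg, abs_mul, habsσ, abs_abs, one_mul]
  have hndlb : εh / 2 ≤ ‖d‖ := by rw [hnd, habsρ]; linarith
  have hnd0 : 0 < ‖d‖ := lt_of_lt_of_le (by linarith) hndlb
  have hsv : ∀ i, s i = -(σ * |ρ|) * v i := by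
    intro i
    simp only [hsdef, hv, Smap, WithLp.ofLp_toLp]
    split
    · exact hd_i i
    · rw [hd_i i]; ring
  have hsveq : s = (-(σ * |ρ|)) • v := by
    ext i; exact hsv i
  have hinner : ∀ a b : E n, ⟪a, b⟫ = ∑ i, a i * b i := fun a b => by
    simp [PiLp.inner_apply, RCLike.inner_apply]
    exact Finset.sum_congr rfl fun i _ => mul_comm _ _
  have hsHs : ⟪s, hess n f x s⟫ = -‖d‖ ^ 3 := by
    rw [hsveq, map_smul, real_inner_smul_left, real_inner_smul_right, ← hρ, hnd, habsρ]
    linear_combination (ρ ^ 3) * hσ2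
  have hgs : ⟪g, s⟫ ≤ 0 := by
    rw [hsveq, real_inner_smul_right, hσ]
    split
    · next h => nlinarith [abs_nonneg ρ]
    · next h =>
        push_neg at h
        nlinarith [abs_nonneg ρ]
  have hs_le : ∀ i, |s i| ≤ |d i| := by
    intro i
    simp only [hsdef, Smap, WithLp.ofLp_toLp]
    split
    · exact le_refl _
    · next h =>
        push_neg at h
        rw [abs_mul]
        calc |x i| * |d i| ≤ 1 * |d i| :=
              mul_le_mul_of_nonneg_right (le_trans h hrεg1) (abs_nonneg _)
          _ = |d i| := one_mul _
  have hns : ‖s‖ ≤ ‖d‖ := norm_le_norm_of_coord _ _ hs_le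
  have hs0 : ∀ i, x i = 0 → s i = 0 := by
    intro i h0
    have hui := hu0 i h0
    simp only [hsdef, Smap, WithLp.ofLp_toLp]
    split
    · rw [hd_i i, hui, mul_zero]
    · rw [h0, zero_mul]
  -- key Armijo sufficient condition
  have key : ∀ α : ℝ, 0 < α → α * ‖d‖ ≤ Real.sqrt εg → α < 3 * (1 - 2 * η) / LH →
      phi n f lam (x + α • s) < phi n f lam x - η * α ^ 2 * ‖d‖ ^ 3 := by
    intro α hα hα1 hα2
    have hαd : ∀ i, α * |d i| ≤ Real.sqrt εg := by
      intro i
      calc α * |d i| ≤ α * ‖d‖ :=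
            mul_le_mul_of_nonneg_left (coord_abs_le_norm d i) hα.le
        _ ≤ _ := hα1
    have hyi : ∀ i, (x + α • s) i = x i + α * s i := fun i => rfl
    have hcoord : ∀ i, lam * |(x + α • s) i| + α * (gradient f x i * s i)
        = lam * |x i| + α * (g i * s i) := by
      intro i
      rw [hyi i]
      have hsi : s i = if Real.sqrt εg < |x i| then d i else x i * d i := by
        rw [hsdef]; rfl
      rcases lt_trichotomy (x i) 0 with hxi | hxi | hxi
      · -- x i < 0
        have hy_abs : |x i + α * s i| = -(x i + α * s i) := by
          apply abs_of_nonpos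
          by_cases hb : Real.sqrt εg < |x i|
          · rw [hsi, if_pos hb]
            have h1 : α * d i ≤ α * |d i| :=
              mul_le_mul_of_nonneg_left (le_abs_self (d i)) hα.le
            have habs : |x i| = -x i := abs_of_neg hxi
            rw [habs] at hb
            linarith [hαd i]
          · push_neg at hb
            rw [hsi, if_neg (not_lt.mpr hb)]
            have h2 : α * |d i| ≤ 1 := le_trans (hαd i) hrεg1
            have h1 : α * (-|d i|) ≤ α * d i :=
              mul_le_mul_of_nonneg_left (neg_abs_le (d i)) hα.le
            have h3 : (0:ℝ) ≤ 1 + α * d i := by linarith only [h1, h2]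
            nlinarith [mul_nonpos_of_nonpos_of_nonneg hxi.le h3, hxi, h3]
        rw [hy_abs, hg]
        simp only [gvec, WithLp.ofLp_toLp]
        rw [if_neg (by linarith : ¬ 0 < x i), if_pos hxi, abs_of_neg hxi]
        ring
      · -- x i = 0
        simp [hs0 i hxi, hxi]
      · -- 0 < x i
        have hy_abs : |x i + α * s i| = x i + α * s i := by
          apply abs_of_nonneg
          by_cases hb : Real.sqrt εg < |x i|
          · rw [hsi, if_pos hb]
            have h1 : α * (-|d i|) ≤ α * d i :=
              mul_le_mul_of_nonneg_left (neg_abs_le (d i)) hα.le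
            have habs : |x i| = x i := abs_of_pos hxi
            rw [habs] at hb
            linarith [hαd i]
          · push_neg at hb
            rw [hsi, if_neg (not_lt.mpr hb)]
            have h2 : α * |d i| ≤ 1 := le_trans (hαd i) hrεg1
            have h1 : α * (-|d i|) ≤ α * d i :=
              mul_le_mul_of_nonneg_left (neg_abs_le (d i)) hα.le
            have h3 : (0:ℝ) ≤ 1 + α * d i := by linarith only [h1, h2]
            nlinarith [mul_nonneg hxi.le h3, hxi, h3]
        rw [hy_abs, hg]
        simp only [gvec, WithLp.ofLp_toLp]
        rw [if_pos hxi, abs_of_pos hxi]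
        ring
    have hsum : lam * (∑ i, |(x + α • s) i|) + α * ⟪gradient f x, s⟫
        = lam * (∑ i, |x i|) + α * ⟪g, s⟫ := by
      rw [hinner (gradient f x) s, hinner g s, Finset.mul_sum, Finset.mul_sum,
        Finset.mul_sum, Finset.mul_sum, ← Finset.sum_add_distrib, ← Finset.sum_add_distrib]
      exact Finset.sum_congr rfl fun i _ => hcoord i
    have hcub := hcubic x (x + α • s)
    rw [show x + α • s - x = α • s from by abel] at hcub
    rw [map_smul, real_inner_smul_right, real_inner_smul_left, real_inner_smul_right,
      hsHs, norm_smul, Real.norm_eq_abs, abs_of_pos hα] at hcub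
    have hcube' : LH / 6 * (α * ‖s‖) ^ 3 ≤ LH / 6 * (α ^ 3 * ‖d‖ ^ 3) := by
      have h1 : α * ‖s‖ ≤ α * ‖d‖ := mul_le_mul_of_nonneg_left hns hα.le
      have h0 : 0 ≤ α * ‖s‖ := by positivity
      have := pow_le_pow_left₀ h0 h1 3
      have h6 : (0:ℝ) ≤ LH / 6 := by linarith
      nlinarith
    have hgsα : α * ⟪g, s⟫ ≤ 0 := mul_nonpos_of_nonneg_of_nonpos hα.le hgs
    have hd3 : 0 < ‖d‖ ^ 3 := by positivity
    have hα2' : α * LH < 3 * (1 - 2 * η) := (lt_div_iff₀ hLH).mp hα2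
    have hstep : LH / 6 * (α ^ 3 * ‖d‖ ^ 3) - 1 / 2 * α ^ 2 * ‖d‖ ^ 3
        < -(η * α ^ 2 * ‖d‖ ^ 3) := by
      nlinarith [mul_pos (pow_pos hα 2) hd3]
    simp only [phi]
    nlinarith [hcub, hsum, hcube', hgsα, hstep]
  -- existence of a successful step
  have hδ : 0 < min (Real.sqrt εg / ‖d‖) (3 * (1 - 2 * η) / LH) :=
    lt_min (div_pos hrεg0 hnd0) (div_pos (by linarith) hLH)
  obtain ⟨j0, hj0⟩ := exists_pow_lt_of_lt_one hδ hθ1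
  have hP : ∃ j : ℕ, phi n f lam (x + θ ^ j • s) <
      phi n f lam x - η * θ ^ (2 * j) * ‖d‖ ^ 3 := by
    refine ⟨j0, ?_⟩
    have h1 : θ ^ j0 < Real.sqrt εg / ‖d‖ := lt_of_lt_of_le hj0 (min_le_left _ _)
    have h2 : θ ^ j0 < 3 * (1 - 2 * η) / LH := lt_of_lt_of_le hj0 (min_le_right _ _)
    have := key (θ ^ j0) (pow_pos hθ0 _) (le_of_lt ((lt_div_iff₀ hnd0).mp h1)) h2
    rw [pow_mul']
    exact this
  obtain ⟨J, hJspec, hJmin⟩ : ∃ J : ℕ, (phi n f lam (x + θ ^ J • s) <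
        phi n f lam x - η * θ ^ (2 * J) * ‖d‖ ^ 3) ∧
      ∀ j' < J, ¬ (phi n f lam (x + θ ^ j' • s) <
        phi n f lam x - η * θ ^ (2 * j') * ‖d‖ ^ 3) :=
    ⟨Nat.find hP, Nat.find_spec hP, fun _ h => Nat.find_min hP h⟩
  refine ⟨J, hJspec, hJmin, ?_⟩
  -- quantitative bound
  set c := 9 * (1 - 2 * η) ^ 2 / LH ^ 2 with hc
  set m := min (εg * εh) (εh ^ 3) with hm
  have hc0 : 0 < c :=
    div_pos (by nlinarith [sq_nonneg (1 - 2 * η)] : (0:ℝ) < 9 * (1 - 2 * η) ^ 2)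
      (by positivity)
  have hm0 : 0 < m := lt_min (by positivity) (by positivity)
  have hmin1 : min 1 c ≤ 1 := min_le_left _ _
  have hminc : min 1 c ≤ c := min_le_right _ _
  have hmin0 : 0 < min 1 c := lt_min one_pos hc0
  have hm_le1 : m ≤ εg * εh := min_le_left _ _
  have hm_le2 : m ≤ εh ^ 3 := min_le_right _ _
  have hd8 : εh ^ 3 ≤ 8 * ‖d‖ ^ 3 := by
    calc εh ^ 3 ≤ (2 * ‖d‖) ^ 3 :=
          pow_le_pow_left₀ hεh0.le (by linarith only [hndlb]) 3
      _ = 8 * ‖d‖ ^ 3 := by ring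
  suffices hB : η * θ ^ 2 / 8 * min 1 c * m ≤ η * θ ^ (2 * J) * ‖d‖ ^ 3 by
    linarith only [hJspec, hB]
  rcases J with _ | k
  · -- J = 0
    have hθ2 : θ ^ 2 ≤ 1 := pow_le_one₀ hθ0.le hθ1.le
    calc η * θ ^ 2 / 8 * min 1 c * m ≤ η * θ ^ 2 / 8 * 1 * (εh ^ 3) := by
          apply mul_le_mul (mul_le_mul_of_nonneg_left hmin1 (by positivity)) hm_le2
            hm0.le (by positivity)
      _ ≤ η * 1 / 8 * 1 * (8 * ‖d‖ ^ 3) := by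
          have h6 := mul_le_mul_of_nonneg_left hθ2 hη0.le
          apply mul_le_mul (by linarith only [h6]) hd8 (by positivity) (by positivity)
      _ = η * θ ^ (2 * 0) * ‖d‖ ^ 3 := by ring
  · -- J = k + 1 : step k failed
    have hfail := hJmin k (Nat.lt_succ_self k)
    have hk : ¬ (θ ^ k * ‖d‖ ≤ Real.sqrt εg ∧ θ ^ k < 3 * (1 - 2 * η) / LH) := by
      rintro ⟨h1, h2⟩
      exact hfail (by rw [pow_mul']; exact key (θ ^ k) (pow_pos hθ0 k) h1 h2)
    push_neg at hk
    have hpow : θ ^ (2 * (k + 1)) = θ ^ 2 * (θ ^ k) ^ 2 := by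
      rw [pow_mul', pow_succ]; ring
    by_cases hA : θ ^ k * ‖d‖ ≤ Real.sqrt εg
    · -- then 3(1-2η)/LH ≤ θ^k
      have hB2 := hk hA
      have h2 : c ≤ (θ ^ k) ^ 2 := by
        have hceq : c = (3 * (1 - 2 * η) / LH) ^ 2 := by
          rw [hc, div_pow]; ring_nf
        rw [hceq]
        exact pow_le_pow_left₀
          (le_of_lt (div_pos (by linarith only [hη1] : (0:ℝ) < 3 * (1 - 2 * η)) hLH)) hB2 2
      have f1 : min 1 c ≤ (θ ^ k) ^ 2 := le_trans hminc h2
      have f2 : m ≤ 8 * ‖d‖ ^ 3 := le_trans hm_le2 hd8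
      calc η * θ ^ 2 / 8 * min 1 c * m
          ≤ η * θ ^ 2 / 8 * ((θ ^ k) ^ 2) * (8 * ‖d‖ ^ 3) := by
            apply mul_le_mul (mul_le_mul_of_nonneg_left f1 (by positivity)) f2
              hm0.le (by positivity)
        _ = η * (θ ^ 2 * (θ ^ k) ^ 2) * ‖d‖ ^ 3 := by ring
        _ = η * θ ^ (2 * (k + 1)) * ‖d‖ ^ 3 := by rw [hpow]
    · push_neg at hA
      have hsq : εg ≤ (θ ^ k) ^ 2 * ‖d‖ ^ 2 := by
        have h1 := mul_self_le_mul_self (Real.sqrt_nonneg εg) hA.le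
        rw [Real.mul_self_sqrt hεg0.le] at h1
        nlinarith [h1]
      have f1 : min 1 c * m ≤ εg * εh := by
        calc min 1 c * m ≤ 1 * m := mul_le_mul_of_nonneg_right hmin1 hm0.le
          _ = m := one_mul m
          _ ≤ εg * εh := hm_le1
      have g1 : εg * εh ≤ (θ ^ k) ^ 2 * ‖d‖ ^ 2 * εh :=
        mul_le_mul_of_nonneg_right hsq hεh0.le
      have g2 : (θ ^ k) ^ 2 * ‖d‖ ^ 2 * εh ≤ (θ ^ k) ^ 2 * ‖d‖ ^ 2 * (2 * ‖d‖) :=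
        mul_le_mul_of_nonneg_left (by linarith) (by positivity)
      calc η * θ ^ 2 / 8 * min 1 c * m = η * θ ^ 2 / 8 * (min 1 c * m) := by ring
        _ ≤ η * θ ^ 2 / 8 * ((θ ^ k) ^ 2 * ‖d‖ ^ 2 * (2 * ‖d‖)) := by
            apply mul_le_mul_of_nonneg_left (le_trans f1 (le_trans g1 g2)) (by positivity)
        _ ≤ η * (θ ^ 2 * (θ ^ k) ^ 2) * ‖d‖ ^ 3 := by
            have hp : 0 < η * θ ^ 2 * (θ ^ k) ^ 2 * ‖d‖ ^ 3 := by positivity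
            linarith only [hp]
        _ = η * θ ^ (2 * (k + 1)) * ‖d‖ ^ 3 := by rw [hpow]
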